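/- arXiv:1706.08021 — 2 statements merged into one kernel-verified Lean document; each statement's English description precedes it below -/
import Mathlib

section
/- Let C(x) = (1/2)·ln(1+x). For 0 < q ≤ 1, a constant c > 0, and a geometric random variable L with parameter q on {1, 2, …}, we have (1/E[L])·E[Σ_{i=2}^{L} C(q(1−q)^{i−1} c)] ≥ (1−q)·C(q c) + ((1−q)/(2q))·ln(1−q), where the sum is empty (equal to 0) when L = 1. -/
noncomputable def Cnat (x : ℝ) : ℝ := (1 / 2) * Real.log (1 + x)

lemma aux_sum (k : ℕ) (A B : ℝ) :
    ∑ i ∈ Finset.Icc 2 (k+1), (A + ((i-1 : ℕ) : ℝ)/2 * B)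
      = k*A + (k*(k+1)/4)*B := by
  induction k with
  | zero => simp
  | succ n ih =>
    rw [show n+1+1 = (n+1)+1 from rfl, Finset.sum_Icc_succ_top (by omega), ih]
    push_cast [Nat.add_sub_cancel]
    ring

lemma hasSum_kk1 {r : ℝ} (hr : |r| < 1) :
    HasSum (fun k : ℕ ↦ ((k : ℝ) * ((k:ℝ)+1)) * r ^ k) (2*r/(1-r)^3) := by
  have h := hasSum_choose_mul_geometric_of_norm_lt_one (𝕜 := ℝ) 2 (by simpa using hr)
  have h2 : HasSum (fun n : ℕ ↦ ((((n+1):ℕ) : ℝ) * ((((n+1):ℕ):ℝ)+1)) * r ^ (n+1))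
      (2*r*(1/(1-r)^(2+1))) := by
    have h' := h.mul_left (2*r)
    convert h' using 1
    · rfl
    funext n
    rw [Nat.cast_choose_two]
    push_cast
    ring
  have h3 := (hasSum_nat_add_iff
    (f := fun k : ℕ ↦ ((k : ℝ) * ((k:ℝ)+1)) * r ^ k) 1).mp h2
  convert h3 using 1
  · rfl
  simp
  ring

theorem geometric_renewal_lower_bound
    (q : ℝ) (hq0 : 0 < q) (hq1 : q ≤ 1) (c : ℝ) (hc : 0 < c) :
    q * ∑' k : ℕ, (q * (1 - q) ^ k) *
        (∑ i ∈ Finset.Icc 2 (k + 1), Cnat (q * (1 - q) ^ (i - 1) * c))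
      ≥ (1 - q) * Cnat (q * c) + ((1 - q) / (2 * q)) * Real.log (1 - q) := by
  rcases eq_or_lt_of_le hq1 with rfl | hq
  · have hz : ∀ k : ℕ, ((1:ℝ) * (1 - 1) ^ k) *
        (∑ i ∈ Finset.Icc 2 (k + 1), Cnat (1 * (1 - 1) ^ (i - 1) * c)) = 0 := by
      intro k
      rcases k with _ | n
      · simp [show Finset.Icc 2 1 = (∅ : Finset ℕ) from rfl]
      · simp [sub_self, pow_succ]
    rw [tsum_congr hz]
    simp
  · set r : ℝ := 1 - q with hrdef
    have hr0 : 0 < r := by simp [hrdef]; linarith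
    have hr1 : r < 1 := by simp [hrdef]; linarith
    have hrabs : |r| < 1 := by rw [abs_of_pos hr0]; exact hr1
    set A : ℝ := Cnat (q * c) with hA
    set B : ℝ := Real.log r with hB
    have hA0 : 0 ≤ A := by
      rw [hA, Cnat]
      have : (0:ℝ) ≤ Real.log (1 + q*c) := Real.log_nonneg (by nlinarith)
      linarith
    -- per-term lower bound
    have hterm : ∀ j : ℕ, A + (j : ℝ)/2 * B ≤ Cnat (q * r ^ j * c) := by
      intro j
      have hrj0 : 0 < r ^ j := pow_pos hr0 j
      have hrj1 : r ^ j ≤ 1 := pow_le_one₀ hr0.le hr1.le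
      have hkey : (1 + q*c) * r ^ j ≤ 1 + q * r ^ j * c := by nlinarith
      have hpos : 0 < (1 + q*c) * r ^ j := by positivity
      have hlog := Real.log_le_log hpos hkey
      rw [Real.log_mul (by positivity) (ne_of_gt hrj0), Real.log_pow] at hlog
      rw [hA, hB, Cnat, Cnat]
      linarith
    -- per-term upper bound (for summability)
    have hub : ∀ j : ℕ, Cnat (q * r ^ j * c) ≤ A := by
      intro j
      have hrj0 : 0 < r ^ j := pow_pos hr0 j
      have hrj1 : r ^ j ≤ 1 := pow_le_one₀ hr0.le hr1.le
      rw [hA, Cnat, Cnat]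
      have : q * r ^ j * c ≤ q * c := by
        have := mul_nonneg (mul_nonneg hq0.le hc.le) (sub_nonneg.mpr hrj1)
        nlinarith
      have := Real.log_le_log (by positivity) (show 1 + q * r ^ j * c ≤ 1 + q*c by linarith)
      linarith
    set f : ℕ → ℝ := fun k ↦ (q * r ^ k) *
        (∑ i ∈ Finset.Icc 2 (k + 1), Cnat (q * r ^ (i - 1) * c)) with hf
    set g : ℕ → ℝ := fun k ↦ (q*A) * ((k:ℝ) * r ^ k) + (q*B/4) * (((k:ℝ)*((k:ℝ)+1)) * r ^ k)
      with hg
    have h1 := hasSum_coe_mul_geometric_of_norm_lt_one (r := r) (by simpa using hrabs)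
    have h2 := hasSum_kk1 hrabs
    have hgsum : HasSum g ((q*A) * (r/(1-r)^2) + (q*B/4) * (2*r/(1-r)^3)) :=
      (h1.mul_left (q*A)).add (h2.mul_left (q*B/4))
    have hcard : ∀ k : ℕ, (Finset.Icc 2 (k+1)).card = k := by
      intro k; rw [Nat.card_Icc]; omega
    -- g ≤ f pointwise
    have hle : ∀ k : ℕ, g k ≤ f k := by
      intro k
      have hsum : ∑ i ∈ Finset.Icc 2 (k+1), (A + ((i-1 : ℕ) : ℝ)/2 * B)
          ≤ ∑ i ∈ Finset.Icc 2 (k + 1), Cnat (q * r ^ (i - 1) * c) :=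
        Finset.sum_le_sum fun i _ ↦ hterm (i-1)
      rw [aux_sum k A B] at hsum
      have hw : 0 ≤ q * r ^ k := by positivity
      calc g k = (q * r ^ k) * ((k:ℝ)*A + ((k:ℝ)*((k:ℝ)+1)/4)*B) := by rw [hg]; ring
        _ ≤ f k := mul_le_mul_of_nonneg_left hsum hw
    -- summability of f
    have hf0 : ∀ k : ℕ, 0 ≤ f k := by
      intro k
      apply mul_nonneg (by positivity)
      apply Finset.sum_nonneg
      intro i _
      rw [Cnat]
      have : (0:ℝ) ≤ Real.log (1 + q * r ^ (i-1) * c) :=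
        Real.log_nonneg (by nlinarith [mul_pos (mul_pos hq0 (pow_pos hr0 (i-1))) hc])
      linarith
    have hfub : ∀ k : ℕ, f k ≤ (q*A) * ((k:ℝ) * r ^ k) := by
      intro k
      have : ∑ i ∈ Finset.Icc 2 (k + 1), Cnat (q * r ^ (i - 1) * c)
          ≤ ∑ _i ∈ Finset.Icc 2 (k + 1), A := Finset.sum_le_sum fun i _ ↦ hub (i-1)
      rw [Finset.sum_const, hcard k, nsmul_eq_mul] at this
      calc f k ≤ (q * r ^ k) * ((k:ℝ) * A) :=
            mul_le_mul_of_nonneg_left this (by positivity)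
        _ = (q*A) * ((k:ℝ) * r ^ k) := by ring
    have hfsummable : Summable f :=
      Summable.of_nonneg_of_le hf0 hfub ((h1.summable).mul_left (q*A))
    have hts := Summable.tsum_le_tsum hle hgsum.summable hfsummable
    rw [hgsum.tsum_eq] at hts
    have h1r : 1 - r = q := by rw [hrdef]; ring
    rw [h1r] at hts
    have hfinal : q * ((q*A) * (r/q^2) + (q*B/4) * (2*r/q^3))
        = r * A + (r / (2*q)) * B := by
      field_simp
      ring
    have := mul_le_mul_of_nonneg_left hts hq0.le
    rw [hfinal] at this
    calc (1 - q) * Cnat (q * c) + ((1 - q) / (2 * q)) * Real.log (1 - q)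
        = r * A + (r / (2*q)) * B := by rw [hA, hB, hrdef]
      _ ≤ q * ∑' k, f k := this
      _ = q * ∑' k : ℕ, (q * (1 - q) ^ k) *
          (∑ i ∈ Finset.Icc 2 (k + 1), Cnat (q * (1 - q) ^ (i - 1) * c)) := by rw [hf]
end

section
/- Let E be a nonnegative random variable, E_c > 0 with P(E ≤ E_c) > 0, and let W be a random variable independent of E taking values in {0, E_c} with P(W = E_c) = E[E | E ≤ E_c]/E_c. Define Ê = W·1{E ≤ E_c} + E·1{E > E_c}. Then E[Ê] = E[E] and P(Ê ≥ E_c) = E[min(E, E_c)]/E_c. -/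
open MeasureTheory

theorem modified_process_properties
    {Ω : Type*} [MeasurableSpace Ω] (μ : Measure Ω) [IsProbabilityMeasure μ]
    (E W : Ω → ℝ) (hE_meas : Measurable E) (hW_meas : Measurable W)
    (hE_nonneg : ∀ ω, 0 ≤ E ω)
    (hE_int : Integrable E μ) (hW_int : Integrable W μ)
    (Ec : ℝ) (hEc : 0 < Ec)
    (hple : 0 < (μ {ω | E ω ≤ Ec}).toReal)
    (hindep : ProbabilityTheory.IndepFun W E μ)
    (hW_vals : ∀ ω, W ω = 0 ∨ W ω = Ec)
    (hW_prob : (μ {ω | W ω = Ec}).toReal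
      = ((∫ ω in {ω | E ω ≤ Ec}, E ω ∂μ) / (μ {ω | E ω ≤ Ec}).toReal) / Ec)
    (Ehat : Ω → ℝ)
    (hEhat : ∀ ω, Ehat ω = if E ω ≤ Ec then W ω else E ω) :
    (∫ ω, Ehat ω ∂μ) = ∫ ω, E ω ∂μ ∧
    (μ {ω | Ehat ω ≥ Ec}).toReal = (∫ ω, min (E ω) Ec ∂μ) / Ec := by
  set A : Set Ω := {ω | E ω ≤ Ec} with hAdef
  have hA : MeasurableSet A := hE_meas measurableSet_Iic
  set B : Set Ω := {ω | W ω = Ec} with hBdef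
  have hB : MeasurableSet B := hW_meas (measurableSet_singleton Ec)
  set p : ℝ := (μ A).toReal with hpdef
  -- independence of events
  have hBA : μ (B ∩ A) = μ B * μ A := by
    have := hindep.measure_inter_preimage_eq_mul {Ec} (Set.Iic Ec)
      (measurableSet_singleton Ec) measurableSet_Iic
    exact this
  have hμfin : ∀ s : Set Ω, μ s ≠ ⊤ := fun s => (measure_lt_top μ s).ne
  have hBAreal : (μ (B ∩ A)).toReal = (μ B).toReal * p := by
    rw [hBA, ENNReal.toReal_mul]
  -- integral of W over A
  have hWA : ∫ ω in A, W ω ∂μ = Ec * ((μ B).toReal * p) := by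
    rw [← integral_indicator hA]
    have heq : A.indicator W = (B ∩ A).indicator (fun _ => Ec) := by
      funext ω
      by_cases hωA : ω ∈ A
      · rcases hW_vals ω with h0 | hEcv
        · have : ω ∉ B ∩ A := by
            intro hm; exact absurd hm.1 (by simpa [hBdef, h0] using hEc.ne)
          simp [Set.indicator, hωA, this, h0]
        · have : ω ∈ B ∩ A := ⟨hEcv, hωA⟩
          simp [Set.indicator, hωA, this, hEcv]
      · have : ω ∉ B ∩ A := fun hm => hωA hm.2
        simp [Set.indicator, hωA, this]
    rw [heq, integral_indicator_const _ (hB.inter hA), smul_eq_mul, measureReal_def, hBAreal]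
    ring
  have hpne : p ≠ 0 := ne_of_gt hple
  have hEcne : Ec ≠ 0 := ne_of_gt hEc
  have hWAeq : ∫ ω in A, W ω ∂μ = ∫ ω in A, E ω ∂μ := by
    rw [hWA, hW_prob]
    field_simp
  -- Ehat decomposition
  have hEhat_fun : Ehat = fun ω => A.indicator W ω + Aᶜ.indicator E ω := by
    funext ω
    by_cases h : ω ∈ A
    · simp only [Set.indicator, hEhat ω, if_pos (show E ω ≤ Ec from h), if_pos h,
        if_neg (show ω ∉ Aᶜ from fun hc => hc h), add_zero]
    · have h' : ¬ E ω ≤ Ec := h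
      simp [hEhat ω, Set.indicator, h, h']
  have hEhat_int : Integrable Ehat μ := by
    rw [hEhat_fun]
    exact (hW_int.indicator hA).add (hE_int.indicator hA.compl)
  constructor
  · have h1 : ∫ ω in A, Ehat ω ∂μ = ∫ ω in A, W ω ∂μ := by
      refine setIntegral_congr_fun hA fun ω hω => ?_
      rw [hEhat ω, if_pos (show E ω ≤ Ec from hω)]
    have h2 : ∫ ω in Aᶜ, Ehat ω ∂μ = ∫ ω in Aᶜ, E ω ∂μ := by
      refine setIntegral_congr_fun hA.compl fun ω hω => ?_
      have h' : ¬ E ω ≤ Ec := hω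
      simp [hEhat ω, h']
    calc ∫ ω, Ehat ω ∂μ = (∫ ω in A, Ehat ω ∂μ) + ∫ ω in Aᶜ, Ehat ω ∂μ :=
          (integral_add_compl hA hEhat_int).symm
      _ = (∫ ω in A, E ω ∂μ) + ∫ ω in Aᶜ, E ω ∂μ := by rw [h1, h2, hWAeq]
      _ = ∫ ω, E ω ∂μ := integral_add_compl hA hE_int
  · -- event identity
    have hSet : {ω | Ehat ω ≥ Ec} = (B ∩ A) ∪ Aᶜ := by
      ext ω
      simp only [Set.mem_setOf_eq, Set.mem_union, Set.mem_inter_iff, Set.mem_compl_iff]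
      constructor
      · intro hge
        by_cases h : ω ∈ A
        · left
          refine ⟨?_, h⟩
          have hEw : Ehat ω = W ω := by rw [hEhat ω, if_pos (show E ω ≤ Ec from h)]
          rcases hW_vals ω with h0 | hEcv
          · rw [hEw, h0] at hge; linarith
          · exact hEcv
        · right; exact h
      · intro h
        rcases h with ⟨hb, ha⟩ | h
        · have hEw : Ehat ω = W ω := by rw [hEhat ω, if_pos (show E ω ≤ Ec from ha)]
          rw [hEw, hb]
        · have h' : ¬ E ω ≤ Ec := h
          have : Ehat ω = E ω := by simp [hEhat ω, h']
          rw [this]; exact le_of_not_ge h'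
    have hdisj : Disjoint (B ∩ A) Aᶜ :=
      Set.disjoint_left.mpr fun ω hω hc => hc hω.2
    have hmeas : μ {ω | Ehat ω ≥ Ec} = μ (B ∩ A) + μ Aᶜ := by
      rw [hSet, measure_union hdisj hA.compl]
    have hLHS : (μ {ω | Ehat ω ≥ Ec}).toReal
        = (μ B).toReal * p + (μ Aᶜ).toReal := by
      rw [hmeas, ENNReal.toReal_add (hμfin _) (hμfin _), hBAreal]
    -- RHS: ∫ min E Ec = ∫_A E + Ec * μ Aᶜ
    have hmin : ∫ ω, min (E ω) Ec ∂μ = (∫ ω in A, E ω ∂μ) + Ec * (μ Aᶜ).toReal := by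
      have hmin_int : Integrable (fun ω => min (E ω) Ec) μ := by exact hE_int.inf (integrable_const Ec)
      have h1 : ∫ ω in A, min (E ω) Ec ∂μ = ∫ ω in A, E ω ∂μ :=
        setIntegral_congr_fun hA fun ω hω => min_eq_left hω
      have h2 : ∫ ω in Aᶜ, min (E ω) Ec ∂μ = Ec * (μ Aᶜ).toReal := by
        have : ∫ ω in Aᶜ, min (E ω) Ec ∂μ = ∫ _ in Aᶜ, Ec ∂μ :=
          setIntegral_congr_fun hA.compl fun ω hω =>
            min_eq_right (le_of_lt (lt_of_not_ge hω))
        rw [this, setIntegral_const, smul_eq_mul, measureReal_def]; ring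
      calc ∫ ω, min (E ω) Ec ∂μ
          = (∫ ω in A, min (E ω) Ec ∂μ) + ∫ ω in Aᶜ, min (E ω) Ec ∂μ :=
            (integral_add_compl hA hmin_int).symm
        _ = (∫ ω in A, E ω ∂μ) + Ec * (μ Aᶜ).toReal := by rw [h1, h2]
    rw [hLHS, hmin, hW_prob]
    field_simp
end
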